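/- Let $f(z,u)$ be a power series with $f=z^{rk}+g(z,u)$, and let $w$ be the weight $w(z)=\frac{1}{r}$, $w(u)=1$ with $m=w(f)$. If $f'=f(zu^{1/r},u)/u^m$ factors as $f'=f_1'f_2'$ into non-unit $\mathbb{Z}/r\mathbb{Z}$-invariant power series, then, setting $m_1=-\min\{j-i: \xi_{i,j}\neq 0\}$ and $m_2=-\min\{j-i: \zeta_{i,j}\neq 0\}$ for $f_1'=\sum\xi_{i,j}z^{ri}u^j$ and $f_2'=\sum\zeta_{i,j}z^{ri}u^j$, one has $m_1+m_2\leq m$, and $f=u^{m-m_1-m_2}f_1f_2$ where $f_l=\sum z^{ri}u^{j-i+m_l}$ (coefficients from $f_l'$); in particular $f$ is reducible as a $\mathbb{Z}/r\mathbb{Z}$-invariant function. -/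

import Mathlib

open MvPowerSeries

noncomputable def DD (i j : ℕ) : Fin 2 →₀ ℕ := Finsupp.single 0 i + Finsupp.single 1 j

@[simp] lemma DD_apply_zero (i j : ℕ) : DD i j 0 = i := by
  simp [DD, Finsupp.single_apply]

@[simp] lemma DD_apply_one (i j : ℕ) : DD i j 1 = j := by
  simp [DD, Finsupp.single_apply]

lemma eq_DD (d : Fin 2 →₀ ℕ) : d = DD (d 0) (d 1) := by
  ext a
  fin_cases a <;> simp [DD, Finsupp.single_apply]

lemma eq_DD' (d : Fin 2 →₀ ℕ) :
    Finsupp.single 0 (d 0) + Finsupp.single 1 (d 1) = d := (eq_DD d).symm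

lemma DD_add (i j k l : ℕ) : DD i j + DD k l = DD (i + k) (j + l) := by
  simp only [DD, Finsupp.single_add]
  abel

lemma DD_inj {i j k l : ℕ} (h : DD i j = DD k l) : i = k ∧ j = l := by
  constructor
  · have := congrArg (fun g : Fin 2 →₀ ℕ => g 0) h
    simpa using this
  · have := congrArg (fun g : Fin 2 →₀ ℕ => g 1) h
    simpa using this

lemma DD_congr {i j k l : ℕ} (h1 : i = k) (h2 : j = l) : DD i j = DD k l := by
  rw [h1, h2]

lemma app01 {a b d : Fin 2 →₀ ℕ} (h : a + b = d) :
    a 0 + b 0 = d 0 ∧ a 1 + b 1 = d 1 := by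
  constructor <;> (rw [← h]; simp)

lemma single_one_add_DD (E i j : ℕ) :
    Finsupp.single (1 : Fin 2) E + DD i j = DD i (E + j) := by
  simp only [DD, Finsupp.single_add]
  abel

theorem stmt_11
    (f f' f1' f2' f1 f2 : MvPowerSeries (Fin 2) ℂ)
    (m : ℕ) (m1 m2 : ℤ)
    (hw : ∀ d : Fin 2 →₀ ℕ, coeff d f ≠ 0 → m ≤ d 0 + d 1)
    (hwex : ∃ d : Fin 2 →₀ ℕ, coeff d f ≠ 0 ∧ d 0 + d 1 = m)
    (hf' : ∀ d : Fin 2 →₀ ℕ, coeff d f' =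
      if (d 0 : ℤ) ≤ (d 1 : ℤ) + (m : ℤ) then
        coeff (Finsupp.single 0 (d 0) + Finsupp.single 1 (d 1 + m - d 0)) f
      else 0)
    (hfac : f' = f1' * f2')
    (h1nu : constantCoeff f1' = 0)
    (h2nu : constantCoeff f2' = 0)
    (hm1 : ∀ d : Fin 2 →₀ ℕ, coeff d f1' ≠ 0 → 0 ≤ (d 1 : ℤ) - (d 0 : ℤ) + m1)
    (hm1ex : ∃ d : Fin 2 →₀ ℕ, coeff d f1' ≠ 0 ∧ (d 1 : ℤ) - (d 0 : ℤ) + m1 = 0)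
    (hm2 : ∀ d : Fin 2 →₀ ℕ, coeff d f2' ≠ 0 → 0 ≤ (d 1 : ℤ) - (d 0 : ℤ) + m2)
    (hm2ex : ∃ d : Fin 2 →₀ ℕ, coeff d f2' ≠ 0 ∧ (d 1 : ℤ) - (d 0 : ℤ) + m2 = 0)
    (hf1 : ∀ d : Fin 2 →₀ ℕ, coeff d f1 =
      if 0 ≤ (d 1 : ℤ) + (d 0 : ℤ) - m1 then
        coeff (Finsupp.single 0 (d 0) +
          Finsupp.single 1 ((d 1 : ℤ) + (d 0 : ℤ) - m1).toNat) f1'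
      else 0)
    (hf2 : ∀ d : Fin 2 →₀ ℕ, coeff d f2 =
      if 0 ≤ (d 1 : ℤ) + (d 0 : ℤ) - m2 then
        coeff (Finsupp.single 0 (d 0) +
          Finsupp.single 1 ((d 1 : ℤ) + (d 0 : ℤ) - m2).toNat) f2'
      else 0) :
    m1 + m2 ≤ (m : ℤ) ∧
    f = (MvPowerSeries.X 1) ^ ((m : ℤ) - m1 - m2).toNat * f1 * f2 ∧
    ¬ Irreducible f := by
  classical
  -- splitting nonzero coefficients of the product
  have split : ∀ d : Fin 2 →₀ ℕ, coeff d f' ≠ 0 →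
      ∃ a b : Fin 2 →₀ ℕ, a + b = d ∧ coeff a f1' ≠ 0 ∧ coeff b f2' ≠ 0 := by
    intro d hd
    rw [hfac, coeff_mul] at hd
    obtain ⟨p, hp, hne⟩ := Finset.exists_ne_zero_of_sum_ne_zero hd
    exact ⟨p.1, p.2, Finset.HasAntidiagonal.mem_antidiagonal.mp hp,
      left_ne_zero_of_mul hne, right_ne_zero_of_mul hne⟩
  -- f' has a monomial with second exponent 0
  obtain ⟨d₀, hd₀, hd₀m⟩ := hwex
  have hfd0 : coeff (DD (d₀ 0) 0) f' ≠ 0 := by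
    rw [hf']
    rw [if_pos (by simp only [DD_apply_zero, DD_apply_one]; push_cast; omega)]
    simp only [DD_apply_zero, DD_apply_one]
    have h1 : 0 + m - d₀ 0 = d₀ 1 := by omega
    rw [h1, eq_DD']
    exact hd₀
  obtain ⟨a₀, b₀, hab₀, ha₀, hb₀⟩ := split _ hfd0
  have hz₀ := app01 hab₀
  simp only [DD_apply_zero, DD_apply_one] at hz₀
  have hm1nn : 0 ≤ m1 := by
    have h1 := hm1 a₀ ha₀
    omega
  have hm2nn : 0 ≤ m2 := by
    have h2 := hm2 b₀ hb₀
    omega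
  have hM1 : (m1.toNat : ℤ) = m1 := Int.toNat_of_nonneg hm1nn
  have hM2 : (m2.toNat : ℤ) = m2 := Int.toNat_of_nonneg hm2nn
  -- lower bound on "valuation" of coefficients of f'
  have hv' : ∀ d : Fin 2 →₀ ℕ, coeff d f' ≠ 0 → -(m1 + m2) ≤ (d 1 : ℤ) - d 0 := by
    intro d hd
    obtain ⟨a, b, hab, ha, hb⟩ := split d hd
    have h1 := hm1 a ha
    have h2 := hm2 b hb
    have hz := app01 hab
    omega
  -- minimal elements at the minimal level
  have hP1 : ∃ t : ℕ, coeff (DD (t + m1.toNat) t) f1' ≠ 0 := by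
    obtain ⟨d, hd, hdeq⟩ := hm1ex
    refine ⟨d 1, ?_⟩
    have h : d 1 + m1.toNat = d 0 := by omega
    rw [h, ← eq_DD d]
    exact hd
  have hP2 : ∃ t : ℕ, coeff (DD (t + m2.toNat) t) f2' ≠ 0 := by
    obtain ⟨d, hd, hdeq⟩ := hm2ex
    refine ⟨d 1, ?_⟩
    have h : d 1 + m2.toNat = d 0 := by omega
    rw [h, ← eq_DD d]
    exact hd
  set t1 := Nat.find hP1 with ht1def
  set t2 := Nat.find hP2 with ht2def
  have hT1 : coeff (DD (t1 + m1.toNat) t1) f1' ≠ 0 := Nat.find_spec hP1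
  have hT2 : coeff (DD (t2 + m2.toNat) t2) f2' ≠ 0 := Nat.find_spec hP2
  have hDDsum : DD (t1 + m1.toNat) t1 + DD (t2 + m2.toNat) t2
      = DD (t1 + t2 + m1.toNat + m2.toNat) (t1 + t2) := by
    rw [DD_add]
    exact DD_congr (by omega) rfl
  have hkey : coeff (DD (t1 + t2 + m1.toNat + m2.toNat) (t1 + t2)) f' =
      coeff (DD (t1 + m1.toNat) t1) f1' * coeff (DD (t2 + m2.toNat) t2) f2' := by
    rw [hfac, coeff_mul]
    apply Finset.sum_eq_single
      ((DD (t1 + m1.toNat) t1, DD (t2 + m2.toNat) t2) :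
        (Fin 2 →₀ ℕ) × (Fin 2 →₀ ℕ))
    · rintro ⟨a, b⟩ hmem hne
      by_contra hprod
      have ha : coeff a f1' ≠ 0 := left_ne_zero_of_mul hprod
      have hb : coeff b f2' ≠ 0 := right_ne_zero_of_mul hprod
      have hab := Finset.HasAntidiagonal.mem_antidiagonal.mp hmem
      have hz := app01 hab
      simp only [DD_apply_zero, DD_apply_one] at hz
      have h1 := hm1 a ha
      have h2 := hm2 b hb
      have ha0 : a 1 + m1.toNat = a 0 := by omega
      have hb0 : b 1 + m2.toNat = b 0 := by omega
      have hP1a : coeff (DD (a 1 + m1.toNat) (a 1)) f1' ≠ 0 := by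
        rw [ha0, ← eq_DD]; exact ha
      have hP2b : coeff (DD (b 1 + m2.toNat) (b 1)) f2' ≠ 0 := by
        rw [hb0, ← eq_DD]; exact hb
      have hta : t1 ≤ a 1 := Nat.find_min' hP1 hP1a
      have htb : t2 ≤ b 1 := Nat.find_min' hP2 hP2b
      have heq1 : a 1 = t1 := by omega
      have heq2 : b 1 = t2 := by omega
      apply hne
      have haeq : a = DD (t1 + m1.toNat) t1 := by
        rw [eq_DD a, ← ha0, heq1]
      have hbeq : b = DD (t2 + m2.toNat) t2 := by
        rw [eq_DD b, ← hb0, heq2]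
      rw [haeq, hbeq]
    · intro hnot
      exact absurd (Finset.HasAntidiagonal.mem_antidiagonal.mpr hDDsum) hnot
  have hkne : coeff (DD (t1 + t2 + m1.toNat + m2.toNat) (t1 + t2)) f' ≠ 0 := by
    rw [hkey]; exact mul_ne_zero hT1 hT2
  -- Part 1 : m1 + m2 ≤ m
  have hmm : m1 + m2 ≤ (m : ℤ) := by
    by_contra hlt
    apply hkne
    rw [hf']
    rw [if_neg (by simp only [DD_apply_zero, DD_apply_one]; push_cast; omega)]
  set E := ((m : ℤ) - m1 - m2).toNat with hEdef
  have hE : (E : ℤ) = (m : ℤ) - m1 - m2 := Int.toNat_of_nonneg (by omega)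
  -- coefficients of X 1 ^ E * g
  have hX : ∀ (g : MvPowerSeries (Fin 2) ℂ) (d : Fin 2 →₀ ℕ),
      coeff d ((X 1 : MvPowerSeries (Fin 2) ℂ) ^ E * g) =
      if E ≤ d 1 then coeff (DD (d 0) (d 1 - E)) g else 0 := by
    intro g d
    rw [coeff_mul]
    split_ifs with h
    · have hs : (∑ p ∈ Finset.HasAntidiagonal.antidiagonal d,
          coeff p.1 ((X 1 : MvPowerSeries (Fin 2) ℂ) ^ E) * coeff p.2 g) =
          coeff (Finsupp.single 1 E) ((X 1 : MvPowerSeries (Fin 2) ℂ) ^ E) *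
            coeff (DD (d 0) (d 1 - E)) g := by
        apply Finset.sum_eq_single
          ((Finsupp.single 1 E, DD (d 0) (d 1 - E)) : (Fin 2 →₀ ℕ) × (Fin 2 →₀ ℕ))
        · rintro ⟨a, b⟩ hmem hne
          rw [coeff_X_pow, if_neg, zero_mul]
          intro haeq
          apply hne
          have hab := Finset.HasAntidiagonal.mem_antidiagonal.mp hmem
          subst haeq
          have hz := app01 hab
          simp [Finsupp.single_apply] at hz
          have hbeq : b = DD (d 0) (d 1 - E) := by
            rw [eq_DD b]
            exact DD_congr (by omega) (by omega)
          rw [hbeq]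
        · intro hnot
          exfalso
          apply hnot
          rw [Finset.HasAntidiagonal.mem_antidiagonal, single_one_add_DD]
          have h2 : E + (d 1 - E) = d 1 := by omega
          rw [h2, ← eq_DD]
      rw [hs, coeff_X_pow, if_pos rfl, one_mul]
    · apply Finset.sum_eq_zero
      rintro ⟨a, b⟩ hmem
      rw [coeff_X_pow, if_neg, zero_mul]
      intro haeq
      have hab := Finset.HasAntidiagonal.mem_antidiagonal.mp hmem
      subst haeq
      have hz := app01 hab
      simp [Finsupp.single_apply] at hz
      omega
  -- transfer coefficients of f1/f2 to f1'/f2'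
  have htr1 : ∀ x y : ℕ, x ≤ y + m1.toNat →
      coeff (DD x (y + m1.toNat - x)) f1 = coeff (DD x y) f1' := by
    intro x y hxy
    rw [hf1]
    rw [if_pos (by simp only [DD_apply_zero, DD_apply_one]; push_cast; omega)]
    simp only [DD_apply_zero, DD_apply_one]
    have h1 : (((y + m1.toNat - x : ℕ) : ℤ) + (x : ℤ) - m1).toNat = y := by omega
    rw [h1]
    rfl
  have htr2 : ∀ x y : ℕ, x ≤ y + m2.toNat →
      coeff (DD x (y + m2.toNat - x)) f2 = coeff (DD x y) f2' := by
    intro x y hxy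
    rw [hf2]
    rw [if_pos (by simp only [DD_apply_zero, DD_apply_one]; push_cast; omega)]
    simp only [DD_apply_zero, DD_apply_one]
    have h1 : (((y + m2.toNat - x : ℕ) : ℤ) + (x : ℤ) - m2).toNat = y := by omega
    rw [h1]
    rfl
  -- Part 2 : the factorization
  have heq : f = (MvPowerSeries.X 1) ^ E * f1 * f2 := by
    rw [mul_assoc]
    apply MvPowerSeries.ext
    intro d
    rw [hX]
    by_cases hjE : E ≤ d 1
    · rw [if_pos hjE]
      by_cases hm : m ≤ d 0 + d 1
      · have hL : coeff d f = coeff (DD (d 0) (d 0 + d 1 - m)) f' := by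
          rw [hf']
          rw [if_pos (by simp only [DD_apply_zero, DD_apply_one]; push_cast; omega)]
          simp only [DD_apply_zero, DD_apply_one]
          have h1 : d 0 + d 1 - m + m - d 0 = d 1 := by omega
          rw [h1, eq_DD']
        rw [hL, hfac, coeff_mul, coeff_mul]
        refine Finset.sum_bij_ne_zero
          (fun p _ _ => (DD (p.1 0) (p.1 1 + m1.toNat - p.1 0),
            DD (p.2 0) (p.2 1 + m2.toNat - p.2 0))) ?_ ?_ ?_ ?_
        · rintro ⟨a, b⟩ h₁ h₂
          dsimp only at h₁ h₂ ⊢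
          have hab := Finset.HasAntidiagonal.mem_antidiagonal.mp h₁
          have hz := app01 hab
          simp only [DD_apply_zero, DD_apply_one] at hz
          have ha : coeff a f1' ≠ 0 := left_ne_zero_of_mul h₂
          have hb : coeff b f2' ≠ 0 := right_ne_zero_of_mul h₂
          have h1 := hm1 a ha
          have h2 := hm2 b hb
          rw [Finset.HasAntidiagonal.mem_antidiagonal, DD_add]
          exact DD_congr (by omega) (by omega)
        · rintro ⟨a, b⟩ h₁ h₂ ⟨c, e⟩ h₃ h₄ hmapeq
          dsimp only at h₁ h₂ h₃ h₄ hmapeq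
          have ha : coeff a f1' ≠ 0 := left_ne_zero_of_mul h₂
          have hb : coeff b f2' ≠ 0 := right_ne_zero_of_mul h₂
          have hc : coeff c f1' ≠ 0 := left_ne_zero_of_mul h₄
          have he : coeff e f2' ≠ 0 := right_ne_zero_of_mul h₄
          have h1 := hm1 a ha
          have h2 := hm2 b hb
          have h3 := hm1 c hc
          have h4 := hm2 e he
          have q1 := DD_inj (congrArg Prod.fst hmapeq)
          have q2 := DD_inj (congrArg Prod.snd hmapeq)
          have e1 : a = c := by
            rw [eq_DD a, eq_DD c]
            exact DD_congr q1.1 (by omega)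
          have e2 : b = e := by
            rw [eq_DD b, eq_DD e]
            exact DD_congr q2.1 (by omega)
          rw [e1, e2]
        · rintro ⟨a, b⟩ h₁ h₂
          dsimp only at h₁ h₂ ⊢
          have hab := Finset.HasAntidiagonal.mem_antidiagonal.mp h₁
          have hz := app01 hab
          simp only [DD_apply_zero, DD_apply_one] at hz
          have ha : coeff a f1 ≠ 0 := left_ne_zero_of_mul h₂
          have hb : coeff b f2 ≠ 0 := right_ne_zero_of_mul h₂
          have c1 : 0 ≤ (a 1 : ℤ) + (a 0 : ℤ) - m1 := by
            by_contra hc1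
            exact ha (by rw [hf1, if_neg hc1])
          have c2 : 0 ≤ (b 1 : ℤ) + (b 0 : ℤ) - m2 := by
            by_contra hc2
            exact hb (by rw [hf2, if_neg hc2])
          refine ⟨(DD (a 0) (a 0 + a 1 - m1.toNat), DD (b 0) (b 0 + b 1 - m2.toNat)),
            ?_, ?_, ?_⟩
          · rw [Finset.HasAntidiagonal.mem_antidiagonal, DD_add]
            exact DD_congr (by omega) (by omega)
          · have v1 := htr1 (a 0) (a 0 + a 1 - m1.toNat) (by omega)
            have w1 : a 0 + a 1 - m1.toNat + m1.toNat - a 0 = a 1 := by omega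
            rw [w1, ← eq_DD a] at v1
            have v2 := htr2 (b 0) (b 0 + b 1 - m2.toNat) (by omega)
            have w2 : b 0 + b 1 - m2.toNat + m2.toNat - b 0 = b 1 := by omega
            rw [w2, ← eq_DD b] at v2
            rw [← v1, ← v2]
            exact h₂
          · simp only [DD_apply_zero, DD_apply_one]
            have w1 : a 0 + a 1 - m1.toNat + m1.toNat - a 0 = a 1 := by omega
            have w2 : b 0 + b 1 - m2.toNat + m2.toNat - b 0 = b 1 := by omega
            rw [w1, w2, ← eq_DD a, ← eq_DD b]
        · rintro ⟨a, b⟩ h₁ h₂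
          dsimp only at h₁ h₂ ⊢
          have ha : coeff a f1' ≠ 0 := left_ne_zero_of_mul h₂
          have hb : coeff b f2' ≠ 0 := right_ne_zero_of_mul h₂
          have h1 := hm1 a ha
          have h2 := hm2 b hb
          have v1 := htr1 (a 0) (a 1) (by omega)
          rw [← eq_DD a] at v1
          have v2 := htr2 (b 0) (b 1) (by omega)
          rw [← eq_DD b] at v2
          rw [v1, v2]
      · -- d 0 + d 1 < m : both sides vanish
        have hL : coeff d f = 0 := by
          by_contra h
          exact hm (hw d h)
        rw [hL, coeff_mul]
        symm
        apply Finset.sum_eq_zero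
        rintro ⟨a, b⟩ hmem
        have hab := Finset.HasAntidiagonal.mem_antidiagonal.mp hmem
        have hz := app01 hab
        simp only [DD_apply_zero, DD_apply_one] at hz
        by_cases c1 : 0 ≤ (a 1 : ℤ) + (a 0 : ℤ) - m1
        · by_cases c2 : 0 ≤ (b 1 : ℤ) + (b 0 : ℤ) - m2
          · exfalso
            omega
          · rw [hf2, if_neg c2, mul_zero]
        · rw [hf1, if_neg c1, zero_mul]
    · rw [if_neg hjE]
      by_cases hm : m ≤ d 0 + d 1
      · have hL : coeff d f = coeff (DD (d 0) (d 0 + d 1 - m)) f' := by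
          rw [hf']
          rw [if_pos (by simp only [DD_apply_zero, DD_apply_one]; push_cast; omega)]
          simp only [DD_apply_zero, DD_apply_one]
          have h1 : d 0 + d 1 - m + m - d 0 = d 1 := by omega
          rw [h1, eq_DD']
        rw [hL]
        by_contra h
        have := hv' _ h
        simp only [DD_apply_zero, DD_apply_one] at this
        omega
      · by_contra h
        exact hm (hw d h)
  -- constant coefficients of f1, f2 vanish
  have hc1 : constantCoeff f1 = 0 := by
    rw [← MvPowerSeries.coeff_zero_eq_constantCoeff_apply, hf1]
    split_ifs with h
    · simp only [Finsupp.coe_zero, Pi.zero_apply, Nat.cast_zero] at h ⊢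
      have hm10 : m1 = 0 := by omega
      have h1 : ((0 : ℤ) + 0 - m1).toNat = 0 := by omega
      rw [h1]
      simpa using h1nu
    · rfl
  have hc2 : constantCoeff f2 = 0 := by
    rw [← MvPowerSeries.coeff_zero_eq_constantCoeff_apply, hf2]
    split_ifs with h
    · simp only [Finsupp.coe_zero, Pi.zero_apply, Nat.cast_zero] at h ⊢
      have hm20 : m2 = 0 := by omega
      have h1 : ((0 : ℤ) + 0 - m2).toNat = 0 := by omega
      rw [h1]
      simpa using h2nu
    · rfl
  refine ⟨hmm, heq, ?_⟩
  intro hirr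
  rcases hirr.isUnit_or_isUnit heq with h | h
  · have h2 := h.map (constantCoeff)
    rw [map_mul, hc1, mul_zero] at h2
    exact not_isUnit_zero h2
  · have h2 := h.map (constantCoeff)
    rw [hc2] at h2
    exact not_isUnit_zero h2
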